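/- Let Ω ⊆ ℝ³ be a bounded open set, b a boundary point of Ω satisfying the exterior Lipschitz graph condition at b, and B ⊆ ℝ³ a bounded open set with closure(Ω) ⊆ B. Let μ denote the 2-dimensional Hausdorff measure on ℝ³ restricted to the topological boundary ∂Ω. Assume the trace inequality: there exists K₀ > 0 such that for every ε ∈ (0,1) and every x ∈ Ω, ∫_{∂Ω} ‖z − x‖⁻⁴ dμ(z) ≤ K₀ ( ε · ∫_{B ∖ closure(Ω)} ‖z − x‖⁻⁶ dz + ε⁻¹ · ∫_{B ∖ closure(Ω)} ‖z − x‖⁻⁴ dz ). Then there exist constants C₂ > 0 and ε₀ > 0 such that for every x ∈ Ω with ‖x − b‖ < ε₀, ∫_{∂Ω} ‖z − x‖⁻⁴ dμ(z) ≤ C₂ · √(‖x − b‖) · ∫_{ℝ³ ∖ closure(Ω)} ‖z − x‖⁻⁶ dz. (Estimate (B.5) of Lemma B.2, with the trace theorem input stated as a hypothesis; note that for G(z) = 1/(4π‖z‖) one has ‖∇G(z − x)‖² = (16π²)⁻¹ ‖z − x‖⁻⁴ and the squared Frobenius norm of the Hessian is ‖∇²G(z − x)‖² = 3/(8π²) ·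 ‖z − x‖⁻⁶, so this is the estimate ‖∇G(·−x)‖²_{L²(∂Ω)} ≤ C √(‖x−b‖) ‖∇²G(·−x)‖²_{L²(ℝ³∖closure(Ω))}.) -/

import Mathlib

open MeasureTheory Filter
open scoped ENNReal Topology

set_option maxHeartbeats 1000000
noncomputable section

/-- The identification of `ℝ² × ℝ` with `ℝ³`: `(s, t) ↦ (s₁, s₂, t)`. -/
def emb (s : EuclideanSpace ℝ (Fin 2)) (t : ℝ) : EuclideanSpace ℝ (Fin 3) :=
  (EuclideanSpace.equiv (Fin 3) ℝ).symm ![s 0, s 1, t]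

/-- The exterior Lipschitz graph condition at a boundary point `b` of `Ω ⊆ ℝ³`. -/
def ExtLipschitzGraphCond (Ω : Set (EuclideanSpace ℝ (Fin 3)))
    (b : EuclideanSpace ℝ (Fin 3)) : Prop :=
  ∃ δ > (0 : ℝ), ∃ A : EuclideanSpace ℝ (Fin 3) ≃ₗᵢ[ℝ] EuclideanSpace ℝ (Fin 3),
    ∃ φ : EuclideanSpace ℝ (Fin 2) → ℝ, ∃ L : NNReal, LipschitzWith L φ ∧ φ 0 = 0 ∧
      ∀ (s : EuclideanSpace ℝ (Fin 2)) (t : ℝ), φ s < t → ‖s‖ ^ 2 + t ^ 2 < δ ^ 2 →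
        b + A (emb s t) ∈ (closure Ω)ᶜ

lemma norm_emb_sq (s : EuclideanSpace ℝ (Fin 2)) (t : ℝ) : ‖emb s t‖ ^ 2 = ‖s‖ ^ 2 + t ^ 2 := by
  rw [EuclideanSpace.norm_eq, EuclideanSpace.norm_eq, Real.sq_sqrt (by positivity),
    Real.sq_sqrt (by positivity)]
  simp [emb, Fin.sum_univ_three, Fin.sum_univ_two, Real.norm_eq_abs, sq_abs]

lemma emb_sub (s s' : EuclideanSpace ℝ (Fin 2)) (t t' : ℝ) :
    emb s t - emb s' t' = emb (s - s') (t - t') := by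
  ext i; fin_cases i <;> rfl

lemma dyadic_exists (a r : ℝ) (hr : 0 < r) (ha : r ≤ a) :
    ∃ k : ℕ, 2 ^ k * r ≤ a ∧ a < 2 ^ (k + 1) * r := by
  set n := ⌊a / r⌋₊ with hn
  have h1 : 1 ≤ a / r := (one_le_div hr).2 ha
  have hn1 : 1 ≤ n := Nat.le_floor (by exact_mod_cast h1)
  refine ⟨Nat.log 2 n, ?_, ?_⟩
  · have h0 : (2 : ℕ) ^ Nat.log 2 n ≤ n := Nat.pow_log_le_self 2 (by omega)
    have h2 : ((2 : ℕ) ^ Nat.log 2 n : ℝ) ≤ a / r :=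
      le_trans (by exact_mod_cast h0) (Nat.floor_le (by positivity))
    calc (2 : ℝ) ^ Nat.log 2 n * r ≤ (a / r) * r := by
          apply mul_le_mul_of_nonneg_right _ hr.le; exact_mod_cast h2
      _ = a := div_mul_cancel₀ a hr.ne'
  · have h0 : n < 2 ^ (Nat.log 2 n + 1) := Nat.lt_pow_succ_log_self (by norm_num) n
    have h3 : a / r < ((2 : ℕ) ^ (Nat.log 2 n + 1) : ℝ) :=
      lt_of_lt_of_le (Nat.lt_floor_add_one _) (by exact_mod_cast h0)
    calc a = (a / r) * r := (div_mul_cancel₀ a hr.ne').symm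
      _ < (2 : ℝ) ^ (Nat.log 2 n + 1) * r := by
          apply mul_lt_mul_of_pos_right _ hr; exact_mod_cast h3

/-- **Estimate (B.5) of Lemma B.2** (with the trace inequality as hypothesis).
For `G(z) = 1/(4π‖z‖)` one has `‖∇G(z−x)‖² = (16π²)⁻¹ ‖z−x‖⁻⁴` and
`‖∇²G(z−x)‖² = 3/(8π²) ‖z−x‖⁻⁶`, so this is the estimate
`‖∇G(·−x)‖²_{L²(∂Ω)} ≤ C₂ √(‖x−b‖) ‖∇²G(·−x)‖²_{L²(ℝ³∖closure Ω)}`. -/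
theorem estimate_B5 (Ω : Set (EuclideanSpace ℝ (Fin 3))) (hΩo : IsOpen Ω)
    (hΩb : Bornology.IsBounded Ω) (b : EuclideanSpace ℝ (Fin 3)) (hb : b ∈ frontier Ω)
    (hcond : ExtLipschitzGraphCond Ω b)
    (B : Set (EuclideanSpace ℝ (Fin 3))) (hBo : IsOpen B) (hBb : Bornology.IsBounded B)
    (hΩB : closure Ω ⊆ B)
    (htrace : ∃ K₀ > (0 : ℝ), ∀ ε ∈ Set.Ioo (0 : ℝ) 1, ∀ x ∈ Ω,
      (∫⁻ z in frontier Ω, ENNReal.ofReal (1 / ‖z - x‖ ^ 4) ∂(μH[2])) ≤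
        ENNReal.ofReal K₀ *
          (ENNReal.ofReal ε * (∫⁻ z in B \ closure Ω, ENNReal.ofReal (1 / ‖z - x‖ ^ 6)) +
            ENNReal.ofReal ε⁻¹ * ∫⁻ z in B \ closure Ω, ENNReal.ofReal (1 / ‖z - x‖ ^ 4))) :
    ∃ C₂ > (0 : ℝ), ∃ ε₀ > (0 : ℝ), ∀ x ∈ Ω, ‖x - b‖ < ε₀ →
      (∫⁻ z in frontier Ω, ENNReal.ofReal (1 / ‖z - x‖ ^ 4) ∂(μH[2])) ≤
        ENNReal.ofReal (C₂ * Real.sqrt ‖x - b‖) *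
          ∫⁻ z in (closure Ω)ᶜ, ENNReal.ofReal (1 / ‖z - x‖ ^ 6) := by
  obtain ⟨K₀, hK₀, htr⟩ := htrace
  obtain ⟨δ, hδ, A, φ, L, hφL, hφ0, hext⟩ := hcond
  set Lr : ℝ := (L : ℝ) with hLr
  have hL0 : (0 : ℝ) ≤ Lr := L.2
  set c₁ : ℝ := 1 / (64 * (Lr + 3) ^ 3) with hc₁def
  have hc₁ : 0 < c₁ := by positivity
  set C₃ : ℝ := 1 + 16 / c₁ with hC₃def
  have hC₃ : 0 < C₃ := by positivity
  refine ⟨K₀ * (1 + C₃), by positivity, min δ 1, by positivity, ?_⟩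
  intro x hx hxb
  set r : ℝ := ‖x - b‖ with hrdef
  have hbΩ : b ∉ Ω := by
    rw [hΩo.frontier_eq] at hb; exact hb.2
  have hr0 : 0 < r := by
    rw [hrdef, norm_pos_iff, sub_ne_zero]
    rintro rfl; exact hbΩ hx
  have hrδ : r < δ := lt_of_lt_of_le hxb (min_le_left _ _)
  have hr1 : r < 1 := lt_of_lt_of_le hxb (min_le_right _ _)
  set v : ℝ≥0∞ := volume (Metric.ball (0 : EuclideanSpace ℝ (Fin 3)) 1) with hvdef
  have hv0 : v ≠ 0 := (Metric.measure_ball_pos volume 0 one_pos).ne'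
  have hvt : v ≠ ⊤ := measure_ball_lt_top.ne
  set ρ : ℝ := r / (Lr + 3) with hρdef
  have hρ : 0 < ρ := by positivity
  have hρr : (Lr + 3) * ρ = r := by rw [hρdef]; field_simp
  set t₀ : ℝ := (Lr + 1) * ρ with ht₀def
  have ht₀0 : 0 ≤ t₀ := by positivity
  set z₀ : EuclideanSpace ℝ (Fin 3) := b + A (emb 0 t₀) with hz₀def
  have hvolball : ∀ (y : EuclideanSpace ℝ (Fin 3)) (R : ℝ), 0 ≤ R →
      volume (Metric.ball y R) = ENNReal.ofReal (R ^ 3) * v := by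
    intro y R hR
    rw [Measure.addHaar_ball volume y hR, finrank_euclideanSpace_fin]
  -- the exterior ball
  have hball : Metric.ball z₀ ρ ⊆ (closure Ω)ᶜ := by
    intro z hz
    set w : EuclideanSpace ℝ (Fin 3) := A.symm (z - b) with hwdef
    set s : EuclideanSpace ℝ (Fin 2) := (EuclideanSpace.equiv (Fin 2) ℝ).symm ![w 0, w 1]
      with hsdef
    set t : ℝ := w 2 with htdef
    have hwe : emb s t = w := by ext i; fin_cases i <;> rfl
    have hAw : A (emb s t) = z - b := by rw [hwe, hwdef, A.apply_symm_apply]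
    have hz' : b + A (emb s t) = z := by rw [hAw]; abel
    have hdist : ‖emb s t - emb 0 t₀‖ < ρ := by
      have h1 : A (emb s t - emb 0 t₀) = z - z₀ := by
        rw [map_sub, hAw, hz₀def]; abel
      have h2 : ‖emb s t - emb 0 t₀‖ = ‖z - z₀‖ := by
        rw [← h1, A.norm_map]
      rw [h2, ← dist_eq_norm]
      exact hz
    rw [emb_sub, sub_zero] at hdist
    have hsq : ‖s‖ ^ 2 + (t - t₀) ^ 2 < ρ ^ 2 := by
      rw [← norm_emb_sq]
      exact pow_lt_pow_left₀ hdist (norm_nonneg _) (by norm_num)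
    have hs : ‖s‖ < ρ := by nlinarith [norm_nonneg s, sq_nonneg (t - t₀)]
    have habs : |t - t₀| < ρ := by
      have h1 : |t - t₀| ^ 2 < ρ ^ 2 := by rw [sq_abs]; nlinarith [norm_nonneg s, sq_nonneg ‖s‖]
      nlinarith [abs_nonneg (t - t₀)]
    have hlo := neg_abs_le (t - t₀)
    have hhi := le_abs_self (t - t₀)
    have htlow : Lr * ρ < t := by nlinarith
    have hthigh : t < (Lr + 2) * ρ := by nlinarith [norm_nonneg s, sq_nonneg ‖s‖]
    have hφs : φ s ≤ Lr * ‖s‖ := by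
      have := hφL.dist_le_mul s 0
      rw [hφ0, dist_zero_right, dist_zero_right] at this
      calc φ s ≤ |φ s| := le_abs_self _
        _ ≤ Lr * ‖s‖ := by exact_mod_cast this
    have h1 : φ s < t :=
      lt_of_le_of_lt (hφs.trans (mul_le_mul_of_nonneg_left hs.le hL0)) htlow
    have h2 : ‖s‖ ^ 2 + t ^ 2 < δ ^ 2 := by
      have htpos : 0 < t := lt_of_le_of_lt (by positivity) htlow
      have hr2 : r ^ 2 < δ ^ 2 := by nlinarith
      nlinarith [norm_nonneg s]
    have := hext s t h1 h2
    rwa [hz'] at this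
  -- notation for the integrals
  set f₄ : EuclideanSpace ℝ (Fin 3) → ℝ≥0∞ := fun z => ENNReal.ofReal (1 / ‖z - x‖ ^ 4) with hf₄def
  set f₆ : EuclideanSpace ℝ (Fin 3) → ℝ≥0∞ := fun z => ENNReal.ofReal (1 / ‖z - x‖ ^ 6) with hf₆def
  set J₆ : ℝ≥0∞ := ∫⁻ z in (closure Ω)ᶜ, f₆ z with hJ₆def
  -- Step A : lower bound for J₆
  have hA : ENNReal.ofReal (c₁ / r ^ 3) * v ≤ J₆ := by
    have hle : ∀ z ∈ Metric.ball z₀ ρ, ENNReal.ofReal (1 / (2 * r) ^ 6) ≤ f₆ z := by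
      intro z hz
      have hz2 : z ∈ (closure Ω)ᶜ := hball hz
      have hzx : 0 < ‖z - x‖ := by
        rw [norm_pos_iff, sub_ne_zero]
        rintro rfl; exact hz2 (subset_closure hx)
      have hzb : ‖z - x‖ ≤ 2 * r := by
        have hz₀b : ‖z₀ - b‖ = t₀ := by
          have h1 : z₀ - b = A (emb 0 t₀) := by rw [hz₀def]; abel
          have h2 : ‖emb 0 t₀‖ ^ 2 = t₀ ^ 2 := by
            rw [norm_emb_sq]; simp
          rw [h1, A.norm_map]
          nlinarith [norm_nonneg (emb 0 t₀)]
        have h3 : ‖z - z₀‖ < ρ := by rw [← dist_eq_norm]; exact hz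
        calc ‖z - x‖ = ‖(z - z₀) + (z₀ - b) + (b - x)‖ := by congr 1; abel
          _ ≤ ‖z - z₀‖ + ‖z₀ - b‖ + ‖b - x‖ := norm_add₃_le
          _ ≤ ρ + t₀ + r := by
              rw [hz₀b]
              have : ‖b - x‖ = r := by rw [hrdef, norm_sub_rev]
              linarith
          _ ≤ 2 * r := by nlinarith
      apply ENNReal.ofReal_le_ofReal
      apply one_div_le_one_div_of_le (by positivity)
      exact pow_le_pow_left₀ hzx.le hzb 6
    calc ENNReal.ofReal (c₁ / r ^ 3) * v
        = ENNReal.ofReal (1 / (2 * r) ^ 6) * (ENNReal.ofReal (ρ ^ 3) * v) := by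
          rw [← mul_assoc, ← ENNReal.ofReal_mul (by positivity)]
          congr 1
          rw [hc₁def, hρdef]
          field_simp
          ring
      _ = ENNReal.ofReal (1 / (2 * r) ^ 6) * volume (Metric.ball z₀ ρ) := by
          rw [hvolball z₀ ρ hρ.le]
      _ = ∫⁻ _ in Metric.ball z₀ ρ, ENNReal.ofReal (1 / (2 * r) ^ 6) := by
          rw [setLIntegral_const, mul_comm]
      _ ≤ ∫⁻ z in Metric.ball z₀ ρ, f₆ z := setLIntegral_mono' measurableSet_ball hle
      _ ≤ J₆ := lintegral_mono' (Measure.restrict_mono hball le_rfl) le_rfl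
  -- Step B far part
  have hfar : (∫⁻ z in B ∩ {z : EuclideanSpace ℝ (Fin 3) | r ≤ ‖z - x‖}, f₄ z) ≤ ENNReal.ofReal (16 / r) * v := by
    set S : ℕ → Set (EuclideanSpace ℝ (Fin 3)) := fun k => {z : EuclideanSpace ℝ (Fin 3) | 2 ^ k * r ≤ ‖z - x‖ ∧ ‖z - x‖ < 2 ^ (k + 1) * r}
      with hSdef
    have hScover : B ∩ {z : EuclideanSpace ℝ (Fin 3) | r ≤ ‖z - x‖} ⊆ ⋃ k, S k := by
      rintro z ⟨-, hz⟩
      obtain ⟨k, hk1, hk2⟩ := dyadic_exists ‖z - x‖ r hr0 hz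
      exact Set.mem_iUnion.2 ⟨k, hk1, hk2⟩
    have hSmeas : ∀ k, MeasurableSet (S k) := by
      intro k
      have : S k = (fun z : EuclideanSpace ℝ (Fin 3) => ‖z - x‖) ⁻¹' Set.Ico (2 ^ k * r) (2 ^ (k + 1) * r) := rfl
      rw [this]
      exact ((continuous_id.sub continuous_const).norm).measurable measurableSet_Ico
    have hterm : ∀ k : ℕ, (∫⁻ z in S k, f₄ z) ≤
        ENNReal.ofReal (8 / r * (1 / 2) ^ k) * v := by
      intro k
      have hpk : (0 : ℝ) < 2 ^ k * r := by positivity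
      calc (∫⁻ z in S k, f₄ z)
          ≤ ∫⁻ _ in S k, ENNReal.ofReal (1 / (2 ^ k * r) ^ 4) := by
            apply setLIntegral_mono' (hSmeas k)
            intro z hz
            apply ENNReal.ofReal_le_ofReal
            apply one_div_le_one_div_of_le (by positivity)
            exact pow_le_pow_left₀ hpk.le hz.1 4
        _ = ENNReal.ofReal (1 / (2 ^ k * r) ^ 4) * volume (S k) := by
            rw [setLIntegral_const]
        _ ≤ ENNReal.ofReal (1 / (2 ^ k * r) ^ 4) * volume (Metric.ball x (2 ^ (k + 1) * r)) := by
            apply mul_le_mul_right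
            apply measure_mono
            intro z hz
            rw [Metric.mem_ball, dist_eq_norm]
            exact hz.2
        _ = ENNReal.ofReal (1 / (2 ^ k * r) ^ 4) * (ENNReal.ofReal ((2 ^ (k + 1) * r) ^ 3) * v) := by
            rw [hvolball x _ (by positivity)]
        _ = ENNReal.ofReal (8 / r * (1 / 2) ^ k) * v := by
            rw [← mul_assoc, ← ENNReal.ofReal_mul (by positivity)]
            congr 2
            rw [one_div_pow]
            field_simp
            ring
    calc (∫⁻ z in B ∩ {z : EuclideanSpace ℝ (Fin 3) | r ≤ ‖z - x‖}, f₄ z)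
        ≤ ∫⁻ z in ⋃ k, S k, f₄ z := lintegral_mono' (Measure.restrict_mono hScover le_rfl) le_rfl
      _ ≤ ∑' k, ∫⁻ z in S k, f₄ z := lintegral_iUnion_le _ _
      _ ≤ ∑' k, ENNReal.ofReal (8 / r * (1 / 2) ^ k) * v := ENNReal.tsum_le_tsum hterm
      _ = (∑' k : ℕ, ENNReal.ofReal (8 / r) * (ENNReal.ofReal (1 / 2)) ^ k) * v := by
          rw [ENNReal.tsum_mul_right]
          congr 1
          apply tsum_congr
          intro k
          rw [ENNReal.ofReal_mul (by positivity), ENNReal.ofReal_pow (by norm_num)]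
      _ = ENNReal.ofReal (8 / r) * (∑' k : ℕ, (ENNReal.ofReal (1 / 2)) ^ k) * v := by
          rw [ENNReal.tsum_mul_left]
      _ = ENNReal.ofReal (16 / r) * v := by
          rw [ENNReal.tsum_geometric,
            show ENNReal.ofReal (1 / 2) = 2⁻¹ by
              rw [ENNReal.ofReal_div_of_pos two_pos, ENNReal.ofReal_one, ENNReal.ofReal_ofNat,
                one_div],
            ENNReal.one_sub_inv_two]
          rw [show ((2 : ℝ≥0∞)⁻¹)⁻¹ = ((2 : ℝ≥0∞)) by simp]
          rw [show (16 : ℝ) / r = (8 / r) * 2 by ring, ENNReal.ofReal_mul (by positivity)]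
          rw [ENNReal.ofReal_ofNat]
      _ = ENNReal.ofReal (16 / r) * v := rfl
  -- Step B near part
  have hnear : (∫⁻ z in (closure Ω)ᶜ ∩ Metric.ball x r, f₄ z) ≤ ENNReal.ofReal (r ^ 2) * J₆ := by
    calc (∫⁻ z in (closure Ω)ᶜ ∩ Metric.ball x r, f₄ z)
        ≤ ∫⁻ z in (closure Ω)ᶜ ∩ Metric.ball x r, ENNReal.ofReal (r ^ 2) * f₆ z := by
          apply setLIntegral_mono' ((isOpen_compl_iff.2 isClosed_closure).measurableSet.inter
            measurableSet_ball)
          rintro z ⟨hz1, hz2⟩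
          have hzx : 0 < ‖z - x‖ := by
            rw [norm_pos_iff, sub_ne_zero]
            rintro rfl; exact hz1 (subset_closure hx)
          have hzr : ‖z - x‖ < r := by rwa [Metric.mem_ball, dist_eq_norm] at hz2
          rw [hf₄def, hf₆def, ← ENNReal.ofReal_mul (by positivity)]
          apply ENNReal.ofReal_le_ofReal
          rw [mul_one_div, div_le_div_iff₀ (by positivity) (by positivity)]
          have h4 : ‖z - x‖ ^ 2 * ‖z - x‖ ^ 4 ≤ r ^ 2 * ‖z - x‖ ^ 4 :=
            mul_le_mul_of_nonneg_right (by nlinarith) (pow_pos hzx 4).le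
          nlinarith [h4]
      _ = ENNReal.ofReal (r ^ 2) * ∫⁻ z in (closure Ω)ᶜ ∩ Metric.ball x r, f₆ z :=
          lintegral_const_mul' _ _ ENNReal.ofReal_ne_top
      _ ≤ ENNReal.ofReal (r ^ 2) * J₆ := by
          apply mul_le_mul_right
          exact lintegral_mono' (Measure.restrict_mono Set.inter_subset_left le_rfl) le_rfl
  -- combine into I₄ bound
  have hsplit : B \ closure Ω ⊆ ((closure Ω)ᶜ ∩ Metric.ball x r) ∪ (B ∩ {z : EuclideanSpace ℝ (Fin 3) | r ≤ ‖z - x‖}) := by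
    rintro z ⟨hzB, hzc⟩
    rcases lt_or_ge ‖z - x‖ r with h | h
    · exact Or.inl ⟨hzc, by rwa [Metric.mem_ball, dist_eq_norm]⟩
    · exact Or.inr ⟨hzB, h⟩
  have hI₄ : (∫⁻ z in B \ closure Ω, f₄ z) ≤ ENNReal.ofReal (C₃ * r ^ 2) * J₆ := by
    have h16 : ENNReal.ofReal (16 / r) * v ≤ ENNReal.ofReal (16 / c₁ * r ^ 2) * J₆ := by
      have ha0 : (0 : ℝ) < c₁ / r ^ 3 := by positivity
      have key : ENNReal.ofReal (16 / r) * v =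
          ENNReal.ofReal (16 / c₁ * r ^ 2) * (ENNReal.ofReal (c₁ / r ^ 3) * v) := by
        rw [← mul_assoc, ← ENNReal.ofReal_mul (by positivity)]
        congr 2
        field_simp
      rw [key]
      exact mul_le_mul_right hA _
    calc (∫⁻ z in B \ closure Ω, f₄ z)
        ≤ ∫⁻ z in ((closure Ω)ᶜ ∩ Metric.ball x r) ∪ (B ∩ {z : EuclideanSpace ℝ (Fin 3) | r ≤ ‖z - x‖}), f₄ z :=
          lintegral_mono' (Measure.restrict_mono hsplit le_rfl) le_rfl
      _ ≤ (∫⁻ z in (closure Ω)ᶜ ∩ Metric.ball x r, f₄ z) +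
            ∫⁻ z in B ∩ {z : EuclideanSpace ℝ (Fin 3) | r ≤ ‖z - x‖}, f₄ z := lintegral_union_le _ _ _
      _ ≤ ENNReal.ofReal (r ^ 2) * J₆ + ENNReal.ofReal (16 / c₁ * r ^ 2) * J₆ :=
          add_le_add (hnear) (hfar.trans h16)
      _ = ENNReal.ofReal (C₃ * r ^ 2) * J₆ := by
          rw [← add_mul, ← ENNReal.ofReal_add (by positivity) (by positivity)]
          congr 2
          rw [hC₃def]; ring
  -- I₆ over B \ closure Ω is at most J₆
  have hI₆ : (∫⁻ z in B \ closure Ω, f₆ z) ≤ J₆ := by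
    apply lintegral_mono' (Measure.restrict_mono _ le_rfl) le_rfl
    intro z hz; exact hz.2
  -- apply the trace inequality with ε = r
  have htrace' := htr r ⟨hr0, hr1⟩ x hx
  have hrsqrt : r ≤ Real.sqrt r := by
    calc r = Real.sqrt (r ^ 2) := (Real.sqrt_sq hr0.le).symm
      _ ≤ Real.sqrt r := Real.sqrt_le_sqrt (by nlinarith)
  calc (∫⁻ z in frontier Ω, ENNReal.ofReal (1 / ‖z - x‖ ^ 4) ∂(μH[2]))
      ≤ ENNReal.ofReal K₀ *
          (ENNReal.ofReal r * (∫⁻ z in B \ closure Ω, f₆ z) +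
            ENNReal.ofReal r⁻¹ * ∫⁻ z in B \ closure Ω, f₄ z) := htrace'
    _ ≤ ENNReal.ofReal K₀ *
          (ENNReal.ofReal r * J₆ + ENNReal.ofReal r⁻¹ * (ENNReal.ofReal (C₃ * r ^ 2) * J₆)) := by
        apply mul_le_mul_right
        exact add_le_add (mul_le_mul_right hI₆ _) (mul_le_mul_right hI₄ _)
    _ = ENNReal.ofReal (K₀ * ((1 + C₃) * r)) * J₆ := by
        rw [← mul_assoc (ENNReal.ofReal r⁻¹), ← ENNReal.ofReal_mul (by positivity)]
        rw [show r⁻¹ * (C₃ * r ^ 2) = C₃ * r by field_simp]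
        rw [← add_mul, ← ENNReal.ofReal_add (by positivity) (by positivity), ← mul_assoc,
          ← ENNReal.ofReal_mul (by positivity)]
        congr 2
        ring
    _ ≤ ENNReal.ofReal (K₀ * (1 + C₃) * Real.sqrt r) * J₆ := by
        apply mul_le_mul_left
        apply ENNReal.ofReal_le_ofReal
        calc K₀ * ((1 + C₃) * r) = K₀ * (1 + C₃) * r := by ring
          _ ≤ K₀ * (1 + C₃) * Real.sqrt r := by
              apply mul_le_mul_of_nonneg_left hrsqrt (by positivity)
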